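/- Under the same setup as the previous variance computation (independent Gaussians v, z, u₁, ε₁,…,ε_J, u₁₊; i₁ = α₁v + z; y₁ = i₁ + u₁; κ = (α₁²σ_v² + σ_z²)/(α₁²σ_v² + σ_z² + σ₁²); x₁ⱼ = β₁ⱼ(i₁ + εⱼ − κy₁); y₁₊ = Σⱼ x₁ⱼ + u₁₊), the following hold: (i) Cov(y₁, y₁₊) = 0; (ii) Cov(v, y₁₊) = σ_v²σ₁²α₁·(Σⱼ β₁ⱼ)/(α₁²σ_v² + σ_z² + σ₁²). -/

import Mathlib

open MeasureTheory ProbabilityTheory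

namespace CovY1PlusAux

open MeasureTheory ProbabilityTheory Real Filter Set
open scoped NNReal ENNReal

lemma integrable_pow_mul_exp {b : ℝ} (hb : 0 < b) (n : ℕ) :
    Integrable (fun x : ℝ => x ^ n * rexp (-b * x ^ 2)) := by
  have h := integrable_rpow_mul_exp_neg_mul_sq hb (s := (n : ℝ))
    (by exact_mod_cast neg_one_lt_zero.trans_le (Nat.cast_nonneg (α := ℝ) n))
  simpa [Real.rpow_natCast] using h

lemma tendsto_mul_exp_top {b : ℝ} (hb : 0 < b) :
    Tendsto (fun x : ℝ => x * rexp (-b * x ^ 2)) atTop (nhds 0) := by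
  have h := rpow_mul_exp_neg_mul_sq_isLittleO_exp_neg hb 1
  have h2 : Tendsto (fun x : ℝ => rexp (-(1/2) * x)) atTop (nhds 0) := by
    have h3 : Tendsto (fun x : ℝ => -(1/2) * x) atTop atBot :=
      by
      have : Tendsto (fun x : ℝ => (1/2 : ℝ) * x) atTop atTop :=
        (tendsto_id (α := ℝ)).const_mul_atTop (by norm_num)
      simpa [neg_mul] using tendsto_neg_atBot_iff.mpr this
    exact Real.tendsto_exp_atBot.comp h3
  have := h.isBigO.trans_tendsto h2
  simpa [Real.rpow_one] using this

lemma integral_sq_mul_exp {b : ℝ} (hb : 0 < b) :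
    ∫ x : ℝ, x ^ 2 * rexp (-b * x ^ 2) = Real.sqrt (π / b) / (2 * b) := by
  have hd : ∀ x : ℝ, HasDerivAt (fun x : ℝ => x * rexp (-b * x ^ 2))
      (rexp (-b * x ^ 2) - 2 * b * (x ^ 2 * rexp (-b * x ^ 2))) x := by
    intro x
    have h1 : HasDerivAt (fun x : ℝ => -b * x ^ 2) (-b * (2 * x)) x := by
      simpa using (hasDerivAt_pow 2 x).const_mul (-b)
    have h3 := (hasDerivAt_id x).mul h1.exp
    simp only [id] at h3
    refine h3.congr_deriv ?_
    ring
  have hi1 : Integrable (fun x : ℝ => rexp (-b * x ^ 2)) := integrable_exp_neg_mul_sq hb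
  have hi2 : Integrable (fun x : ℝ => x ^ 2 * rexp (-b * x ^ 2)) := integrable_pow_mul_exp hb 2
  have hI : Integrable (fun x : ℝ =>
      rexp (-b * x ^ 2) - 2 * b * (x ^ 2 * rexp (-b * x ^ 2))) :=
    hi1.sub (hi2.const_mul (2 * b))
  have htop := tendsto_mul_exp_top hb
  have hbot : Tendsto (fun x : ℝ => x * rexp (-b * x ^ 2)) atBot (nhds 0) := by
    have h1 : Tendsto (fun x : ℝ => -x * rexp (-b * (-x) ^ 2)) atBot (nhds 0) :=
      htop.comp tendsto_neg_atBot_atTop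
    have h2 := h1.neg
    simpa [neg_mul, neg_neg] using h2
  have key := integral_of_hasDerivAt_of_tendsto hd hI hbot htop
  rw [integral_sub hi1 (hi2.const_mul _), integral_const_mul, integral_gaussian, sub_zero] at key
  have h2b : (2 : ℝ) * b ≠ 0 := by positivity
  field_simp at key ⊢
  linarith


lemma pdf_eq {s : ℝ≥0} :
    gaussianPDFReal 0 s = fun x : ℝ =>
      (Real.sqrt (2 * π * s))⁻¹ * rexp (-(((2:ℝ) * s)⁻¹) * x ^ 2) := by
  ext x
  rw [gaussianPDFReal]
  congr 1
  rw [sub_zero, div_eq_mul_inv]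
  ring

lemma integral_gaussianReal_eq {s : ℝ≥0} (hs : s ≠ 0) (g : ℝ → ℝ) :
    ∫ x, g x ∂(gaussianReal 0 s) = ∫ x, gaussianPDFReal 0 s x * g x := by
  rw [gaussianReal_of_var_ne_zero _ hs, gaussianPDF_def]
  have h1 : (fun x => ENNReal.ofReal (gaussianPDFReal 0 s x))
      = fun x => (((gaussianPDFReal 0 s x).toNNReal : ℝ≥0) : ℝ≥0∞) := rfl
  rw [h1, integral_withDensity_eq_integral_smul
    ((measurable_gaussianPDFReal 0 s).real_toNNReal) g]
  congr 1
  ext x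
  simp [NNReal.smul_def, Real.coe_toNNReal _ (gaussianPDFReal_nonneg 0 s x)]

lemma integrable_gaussianReal {s : ℝ≥0} (hs : s ≠ 0) {g : ℝ → ℝ}
    (h : Integrable (fun x => g x * gaussianPDFReal 0 s x)) :
    Integrable g (gaussianReal 0 s) := by
  rw [gaussianReal_of_var_ne_zero _ hs,
    integrable_withDensity_iff (measurable_gaussianPDF 0 s)
      (ae_of_all _ fun x => ENNReal.ofReal_lt_top)]
  refine h.congr (ae_of_all _ fun x => ?_)
  simp [gaussianPDF_def, ENNReal.toReal_ofReal (gaussianPDFReal_nonneg 0 s x)]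

lemma g_i1 (s : ℝ≥0) : Integrable (fun x : ℝ => x) (gaussianReal 0 s) := by
  by_cases hs : s = 0
  · subst hs
    rw [gaussianReal_zero_var]
    refine (integrable_const (0:ℝ)).congr ?_
    rw [ae_dirac_eq]
    simp [Filter.EventuallyEq, Filter.eventually_pure]
  · have hb : 0 < ((2:ℝ) * s)⁻¹ := by
      have : (0:ℝ) < s := NNReal.coe_pos.mpr (pos_iff_ne_zero.mpr hs)
      positivity
    refine integrable_gaussianReal hs ?_
    rw [pdf_eq]
    refine ((integrable_pow_mul_exp hb 1).const_mul
      ((Real.sqrt (2 * π * s))⁻¹)).congr (ae_of_all _ fun x => ?_)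
    ring

lemma g_i2 (s : ℝ≥0) : Integrable (fun x : ℝ => x * x) (gaussianReal 0 s) := by
  by_cases hs : s = 0
  · subst hs
    rw [gaussianReal_zero_var]
    refine (integrable_const (0:ℝ)).congr ?_
    rw [ae_dirac_eq]
    simp [Filter.EventuallyEq, Filter.eventually_pure]
  · have hb : 0 < ((2:ℝ) * s)⁻¹ := by
      have : (0:ℝ) < s := NNReal.coe_pos.mpr (pos_iff_ne_zero.mpr hs)
      positivity
    refine integrable_gaussianReal hs ?_
    rw [pdf_eq]
    refine ((integrable_pow_mul_exp hb 2).const_mul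
      ((Real.sqrt (2 * π * s))⁻¹)).congr (ae_of_all _ fun x => ?_)
    ring

lemma g_m1 (s : ℝ≥0) : ∫ x, x ∂(gaussianReal 0 s) = 0 := by
  by_cases hs : s = 0
  · subst hs; rw [gaussianReal_zero_var]; simp
  · rw [integral_gaussianReal_eq hs]
    have hodd : ∀ x : ℝ, gaussianPDFReal 0 s (-x) * (-x)
        = -(gaussianPDFReal 0 s x * x) := by
      intro x
      rw [pdf_eq]
      simp only [neg_sq]
      ring
    have h2 := integral_neg_eq_self (fun x => gaussianPDFReal 0 s x * x) volume
    have h3 : ∫ x, gaussianPDFReal 0 s (-x) * (-x)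
        = - ∫ x, gaussianPDFReal 0 s x * x := by
      simp_rw [hodd]
      exact integral_neg _
    rw [h3] at h2
    linarith

lemma g_m2 (s : ℝ≥0) : ∫ x, x * x ∂(gaussianReal 0 s) = (s : ℝ) := by
  by_cases hs : s = 0
  · subst hs; rw [gaussianReal_zero_var]; simp
  · have hspos : (0:ℝ) < s := NNReal.coe_pos.mpr (pos_iff_ne_zero.mpr hs)
    have hb : 0 < ((2:ℝ) * s)⁻¹ := by positivity
    rw [integral_gaussianReal_eq hs]
    have h1 : ∫ x, gaussianPDFReal 0 s x * (x * x)
        = (Real.sqrt (2 * π * s))⁻¹ * ∫ x, x ^ 2 * rexp (-(((2:ℝ) * s)⁻¹) * x ^ 2) := by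
      rw [← integral_const_mul]
      congr 1
      ext x
      rw [pdf_eq]
      ring
    rw [h1, integral_sq_mul_exp hb]
    have hπ : π / ((2:ℝ) * s)⁻¹ = 2 * π * s := by
      field_simp
    have h2b : (2:ℝ) * ((2:ℝ) * s)⁻¹ = ((s:ℝ))⁻¹ := by
      field_simp
    rw [hπ, h2b]
    have hsq : (0:ℝ) < Real.sqrt (2 * π * s) := by positivity
    rw [div_inv_eq_mul, ← mul_assoc, inv_mul_cancel₀ hsq.ne', one_mul]


lemma map_moments {Ω : Type*} [MeasurableSpace Ω] {μ : Measure Ω} {X : Ω → ℝ}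
    (hm : Measurable X) (s : ℝ≥0) (h : Measure.map X μ = gaussianReal 0 s) :
    Integrable X μ ∧ Integrable (fun ω => X ω * X ω) μ ∧
      (∫ ω, X ω ∂μ = 0) ∧ ∫ ω, X ω * X ω ∂μ = (s : ℝ) := by
  have hid : AEStronglyMeasurable (fun x : ℝ => x) (Measure.map X μ) :=
    aestronglyMeasurable_id
  have hsq : AEStronglyMeasurable (fun x : ℝ => x * x) (Measure.map X μ) :=
    (measurable_id.mul measurable_id).aestronglyMeasurable
  have h1 : Integrable (fun x : ℝ => x) (Measure.map X μ) := by rw [h]; exact g_i1 s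
  have h2 : Integrable (fun x : ℝ => x * x) (Measure.map X μ) := by rw [h]; exact g_i2 s
  refine ⟨(integrable_map_measure hid hm.aemeasurable).mp h1,
    (integrable_map_measure hsq hm.aemeasurable).mp h2, ?_, ?_⟩
  · rw [← integral_map hm.aemeasurable hid, h]; exact g_m1 s
  · rw [← integral_map hm.aemeasurable hsq, h]; exact g_m2 s

lemma int_lincomb {Ω : Type*} [MeasurableSpace Ω] {μ : Measure Ω} {ι : Type*} [Fintype ι]
    {X : ι → Ω → ℝ} (c : ι → ℝ)
    (hI : ∀ k, Integrable (X k) μ) (hE : ∀ k, ∫ ω, X k ω ∂μ = 0) :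
    ∫ ω, ∑ k, c k * X k ω ∂μ = 0 := by
  rw [integral_finset_sum _ (fun k _ => (hI k).const_mul (c k))]
  simp [integral_const_mul, hE]

lemma cov_lincomb {Ω : Type*} [MeasurableSpace Ω] {μ : Measure Ω} {ι : Type*} [Fintype ι]
    {X : ι → Ω → ℝ} (s c d : ι → ℝ)
    (hI2 : ∀ k l, Integrable (fun ω => X k ω * X l ω) μ)
    (hod : ∀ k l, k ≠ l → ∫ ω, X k ω * X l ω ∂μ = 0)
    (hV : ∀ k, ∫ ω, X k ω * X k ω ∂μ = s k) :
    ∫ ω, (∑ k, c k * X k ω) * (∑ k, d k * X k ω) ∂μ = ∑ k, c k * d k * s k := by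
  have hexp : ∀ ω : Ω, (∑ k, c k * X k ω) * (∑ k, d k * X k ω)
      = ∑ k, ∑ l, (c k * d l) * (X k ω * X l ω) := by
    intro ω
    rw [Finset.sum_mul_sum]
    refine Finset.sum_congr rfl fun k _ => Finset.sum_congr rfl fun l _ => by ring
  simp_rw [hexp]
  rw [integral_finset_sum _ (fun k _ =>
    integrable_finset_sum _ (fun l _ => (hI2 k l).const_mul _))]
  have hterm : ∀ k, ∫ ω, ∑ l, (c k * d l) * (X k ω * X l ω) ∂μ = c k * d k * s k := by
    intro k
    rw [integral_finset_sum _ (fun l _ => (hI2 k l).const_mul _)]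
    rw [Finset.sum_eq_single k]
    · rw [integral_const_mul, hV k]
    · intro l _ hlk
      rw [integral_const_mul, hod k l (Ne.symm hlk), mul_zero]
    · intro hk
      exact absurd (Finset.mem_univ k) hk
  exact Finset.sum_congr rfl fun k _ => hterm k

end CovY1PlusAux

open CovY1PlusAux in
/-- Covariances of the time-1₊ order flow in the multi-HFT Kyle model:
(i) `Cov(y₁, y₁₊) = 0`; (ii) `Cov(v, y₁₊) = σ_v² σ₁² α₁ (Σⱼ β₁ⱼ)/(α₁²σ_v² + σ_z² + σ₁²)`. -/
theorem cov_y1plus {Ω : Type*} [MeasurableSpace Ω] (μ : Measure Ω)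
    [IsProbabilityMeasure μ] (n : ℕ) (hn : 1 ≤ n)
    (v z u1 u1p : Ω → ℝ) (ε : Fin n → Ω → ℝ) (α₁ : ℝ) (β : Fin n → ℝ)
    (σv σz σ1 σe σ1p : NNReal) (hσv : 0 < σv) (hσ1 : 0 < σ1)
    (hmv : Measurable v) (hmz : Measurable z) (hmu1 : Measurable u1)
    (hmu1p : Measurable u1p) (hmε : ∀ j, Measurable (ε j))
    (hv : Measure.map v μ = gaussianReal 0 (σv ^ 2))
    (hz : Measure.map z μ = gaussianReal 0 (σz ^ 2))
    (hu1 : Measure.map u1 μ = gaussianReal 0 (σ1 ^ 2))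
    (hu1p : Measure.map u1p μ = gaussianReal 0 (σ1p ^ 2))
    (hε : ∀ j, Measure.map (ε j) μ = gaussianReal 0 (σe ^ 2))
    (hindep : iIndepFun
      (Sum.elim (fun j => ε j) ![v, z, u1, u1p]) μ)
    (κ : ℝ)
    (hκ : κ = (α₁ ^ 2 * (σv : ℝ) ^ 2 + (σz : ℝ) ^ 2) /
      (α₁ ^ 2 * (σv : ℝ) ^ 2 + (σz : ℝ) ^ 2 + (σ1 : ℝ) ^ 2))
    (y₁ y₁p : Ω → ℝ)
    (hy₁ : y₁ = fun ω => (α₁ * v ω + z ω) + u1 ω)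
    (hy₁p : y₁p = fun ω =>
      (∑ j, β j * ((α₁ * v ω + z ω) + ε j ω - κ * y₁ ω)) + u1p ω) :
    (∫ ω, (y₁ ω - ∫ ω', y₁ ω' ∂μ) * (y₁p ω - ∫ ω', y₁p ω' ∂μ) ∂μ = 0) ∧
    (∫ ω, (v ω - ∫ ω', v ω' ∂μ) * (y₁p ω - ∫ ω', y₁p ω' ∂μ) ∂μ =
      (σv : ℝ) ^ 2 * (σ1 : ℝ) ^ 2 * α₁ * (∑ j, β j) /
        (α₁ ^ 2 * (σv : ℝ) ^ 2 + (σz : ℝ) ^ 2 + (σ1 : ℝ) ^ 2)) := by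
  classical
  set X : (Fin n ⊕ Fin 4) → Ω → ℝ := Sum.elim (fun j => ε j) ![v, z, u1, u1p] with hXdef
  set sv : (Fin n ⊕ Fin 4) → NNReal :=
    Sum.elim (fun _ => σe ^ 2) ![σv ^ 2, σz ^ 2, σ1 ^ 2, σ1p ^ 2] with hsvdef
  have hfacts : ∀ k, Integrable (X k) μ ∧ Integrable (fun ω => X k ω * X k ω) μ ∧
      (∫ ω, X k ω ∂μ = 0) ∧ ∫ ω, X k ω * X k ω ∂μ = ((sv k : ℝ)) := by
    rintro (j | i)
    · exact map_moments (hmε j) _ (hε j)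
    · fin_cases i
      · exact map_moments hmv _ hv
      · exact map_moments hmz _ hz
      · exact map_moments hmu1 _ hu1
      · exact map_moments hmu1p _ hu1p
  have hI2 : ∀ k l, Integrable (fun ω => X k ω * X l ω) μ := by
    intro k l
    by_cases hkl : k = l
    · subst hkl; exact (hfacts k).2.1
    · exact (hindep.indepFun hkl).integrable_mul (hfacts k).1 (hfacts l).1
  have hod : ∀ k l, k ≠ l → ∫ ω, X k ω * X l ω ∂μ = 0 := by
    intro k l hkl
    have h := (hindep.indepFun hkl).integral_mul_eq_mul_integral (hfacts k).1.1 (hfacts l).1.1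
    have hfun : (fun ω => X k ω * X l ω) = X k * X l := rfl
    rw [hfun, h, (hfacts k).2.2.1, zero_mul]
  set B : ℝ := ∑ j, β j with hB
  set cy : (Fin n ⊕ Fin 4) → ℝ :=
    Sum.elim β ![B * (1 - κ) * α₁, B * (1 - κ), -(B * κ), 1] with hcy
  set dy : (Fin n ⊕ Fin 4) → ℝ := Sum.elim (fun _ => 0) ![α₁, 1, 1, 0] with hdy
  set ev : (Fin n ⊕ Fin 4) → ℝ := Sum.elim (fun _ => 0) ![1, 0, 0, 0] with hev
  have hy₁X : y₁ = fun ω => ∑ k, dy k * X k ω := by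
    funext ω
    rw [hy₁]
    simp [hdy, hXdef, Fintype.sum_sum_type, Fin.sum_univ_four]
  have hvX : v = fun ω => ∑ k, ev k * X k ω := by
    funext ω
    simp [hev, hXdef, Fintype.sum_sum_type, Fin.sum_univ_four]
  have hy₁pX : y₁p = fun ω => ∑ k, cy k * X k ω := by
    funext ω
    rw [hy₁p, hy₁]
    have hsplit : ∀ j : Fin n,
        β j * ((α₁ * v ω + z ω) + ε j ω - κ * ((α₁ * v ω + z ω) + u1 ω))
        = β j * ε j ω
          + β j * ((α₁ * v ω + z ω) - κ * ((α₁ * v ω + z ω) + u1 ω)) := by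
      intro j; ring
    simp only [hsplit, Finset.sum_add_distrib, ← Finset.sum_mul]
    simp [hcy, hXdef, hB, Fintype.sum_sum_type, Fin.sum_univ_four]
    ring
  have hIlin : ∀ k, Integrable (X k) μ := fun k => (hfacts k).1
  have hElin : ∀ k, ∫ ω, X k ω ∂μ = 0 := fun k => (hfacts k).2.2.1
  have hVlin : ∀ k, ∫ ω, X k ω * X k ω ∂μ = ((sv k : ℝ)) := fun k => (hfacts k).2.2.2
  have hEy₁ : ∫ ω', y₁ ω' ∂μ = 0 := by rw [hy₁X]; exact int_lincomb dy hIlin hElin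
  have hEy₁p : ∫ ω', y₁p ω' ∂μ = 0 := by rw [hy₁pX]; exact int_lincomb cy hIlin hElin
  have hEv : ∫ ω', v ω' ∂μ = 0 := by rw [hvX]; exact int_lincomb ev hIlin hElin
  have hD : (0 : ℝ) < α₁ ^ 2 * (σv : ℝ) ^ 2 + (σz : ℝ) ^ 2 + (σ1 : ℝ) ^ 2 := by
    have h1 : (0:ℝ) < (σ1 : ℝ) := hσ1
    positivity
  constructor
  · rw [hEy₁, hEy₁p]
    simp only [sub_zero]
    rw [hy₁X, hy₁pX, cov_lincomb (fun k => ((sv k : ℝ))) dy cy hI2 hod hVlin]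
    simp [hdy, hcy, hsvdef, Fintype.sum_sum_type, Fin.sum_univ_four, hκ]
    field_simp
    ring
  · rw [hEv, hEy₁p]
    simp only [sub_zero]
    rw [hvX, hy₁pX, cov_lincomb (fun k => ((sv k : ℝ))) ev cy hI2 hod hVlin]
    simp [hev, hcy, hsvdef, Fintype.sum_sum_type, Fin.sum_univ_four, hκ, hB]
    field_simp
    ring
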